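/- Let n ≥ 2 and let I = ⟨x_1x_2, x_2x_3, …, x_{n−1}x_n⟩ ⊂ K[x_1,…,x_n] be the edge ideal of the path P_n over a field K. Then v(I^k) = 2k − 1 for all integers k ≥ 1 with k ≥ ⌊n/2⌋ − 1. -/

import Mathlib

open MvPolynomial

/-- A graded (homogeneous) ideal: one generated by homogeneous polynomials. -/
def IsHomogeneousIdeal {K : Type*} [Field K] {n : ℕ}
    (I : Ideal (MvPolynomial (Fin n) K)) : Prop :=
  ∃ G : Set (MvPolynomial (Fin n) K),
    (∀ f ∈ G, ∃ d, f.IsHomogeneous d) ∧ I = Ideal.span G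

/-- `Ass(I)`: the associated primes of `S/I`. -/
def Ass {K : Type*} [Field K] {n : ℕ} (I : Ideal (MvPolynomial (Fin n) K)) :
    Set (Ideal (MvPolynomial (Fin n) K)) :=
  associatedPrimes (MvPolynomial (Fin n) K) (MvPolynomial (Fin n) K ⧸ I)

/-- The local v-number `v_p(I)`. -/
noncomputable def vNumberAt {K : Type*} [Field K] {n : ℕ}
    (I p : Ideal (MvPolynomial (Fin n) K)) : ℕ :=
  sInf {d | ∃ f : MvPolynomial (Fin n) K, f.IsHomogeneous d ∧
    I.colon (Ideal.span {f}) = p}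

/-- The v-number `v(I)`. -/
noncomputable def vNumber {K : Type*} [Field K] {n : ℕ}
    (I : Ideal (MvPolynomial (Fin n) K)) : ℕ :=
  sInf {d | ∃ f : MvPolynomial (Fin n) K, ∃ p ∈ Ass I, f.IsHomogeneous d ∧
    I.colon (Ideal.span {f}) = p}

/-- `α(J)`: the least degree of a nonzero element of `J`. -/
noncomputable def alphaNum {K : Type*} [Field K] {n : ℕ}
    (J : Ideal (MvPolynomial (Fin n) K)) : ℕ :=
  sInf {d | ∃ f ∈ J, f ≠ 0 ∧ f.totalDegree = d}

/-- `c(I) = max{α(p) : p ∈ Ass(I)}`. -/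
noncomputable def cNum {K : Type*} [Field K] {n : ℕ}
    (I : Ideal (MvPolynomial (Fin n) K)) : ℕ :=
  sSup (alphaNum '' Ass I)

/-! ### Auxiliary machinery -/

section Aux

variable {K : Type*} [Field K] {n : ℕ}

/-- Weighted degree of an exponent vector, with weights indexed by `ℕ`. -/
def wdeg (w : ℕ → ℕ) (μ : Fin n →₀ ℕ) : ℕ := ∑ j : Fin n, w j.val * μ j

lemma wdeg_add (w : ℕ → ℕ) (μ ν : Fin n →₀ ℕ) : wdeg w (μ + ν) = wdeg w μ + wdeg w ν := by
  simp [wdeg, Finsupp.add_apply, mul_add, Finset.sum_add_distrib]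

lemma wdeg_zero (w : ℕ → ℕ) : wdeg (n := n) w 0 = 0 := by simp [wdeg]

lemma wdeg_smul (w : ℕ → ℕ) (b : ℕ) (μ : Fin n →₀ ℕ) : wdeg w (b • μ) = b * wdeg w μ := by
  simp only [wdeg, Finsupp.smul_apply, smul_eq_mul, Finset.mul_sum]
  exact Finset.sum_congr rfl fun j _ => by ring

lemma wdeg_single (w : ℕ → ℕ) (j : Fin n) (m : ℕ) : wdeg w (Finsupp.single j m) = w j.val * m := by
  rw [wdeg, Finset.sum_eq_single j]
  · simp
  · intro i _ hne
    simp [Finsupp.single_apply, Ne.symm hne]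
  · intro h; exact absurd (Finset.mem_univ j) h

lemma wdeg_sum {ι : Type*} (w : ℕ → ℕ) (s : Finset ι) (m : ι → (Fin n →₀ ℕ)) :
    wdeg w (∑ i ∈ s, m i) = ∑ i ∈ s, wdeg w (m i) := by
  classical
  induction s using Finset.induction_on with
  | empty => simp [wdeg_zero]
  | insert _ _ h ih => rw [Finset.sum_insert h, Finset.sum_insert h, wdeg_add, ih]

lemma wdeg_one_eq (μ : Fin n →₀ ℕ) : wdeg (fun _ => 1) μ = μ.degree := by
  rw [wdeg, Finsupp.degree]
  simp only [one_mul]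
  exact (Finset.sum_subset (Finset.subset_univ _)
    (fun x _ hx => Finsupp.notMem_support_iff.mp hx)).symm

lemma wdeg_one_eq' (μ : Fin n →₀ ℕ) : wdeg (fun _ => 1) μ = μ.sum fun _ e => e := by
  rw [wdeg_one_eq]; rfl

/-- The ideal of polynomials all of whose monomials have weighted degree at least `c`. -/
def Wid (w : ℕ → ℕ) (c : ℕ) : Ideal (MvPolynomial (Fin n) K) where
  carrier := {p | ∀ μ : Fin n →₀ ℕ, wdeg w μ < c → coeff μ p = 0}
  add_mem' := fun ha hb μ h => by rw [coeff_add, ha μ h, hb μ h, add_zero]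
  zero_mem' := fun μ _ => by simp
  smul_mem' := by
    intro a p hp μ h
    rw [smul_eq_mul, coeff_mul]
    apply Finset.sum_eq_zero
    rintro ⟨u, v⟩ huv
    rw [Finset.HasAntidiagonal.mem_antidiagonal] at huv
    replace huv : u + v = μ := huv
    show coeff u a * coeff v p = 0
    have hv : wdeg w v ≤ wdeg w μ := by rw [← huv, wdeg_add]; omega
    rw [hp v (by omega), mul_zero]

lemma mem_Wid {w : ℕ → ℕ} {c : ℕ} {p : MvPolynomial (Fin n) K} :
    p ∈ Wid w c ↔ ∀ μ : Fin n →₀ ℕ, wdeg w μ < c → coeff μ p = 0 := Iff.rfl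

lemma mul_mem_Wid {w : ℕ → ℕ} {a b : ℕ} {p q : MvPolynomial (Fin n) K}
    (hp : p ∈ Wid (K := K) w a) (hq : q ∈ Wid (K := K) w b) : p * q ∈ Wid (K := K) w (a + b) := by
  rw [mem_Wid] at *
  intro μ h
  rw [coeff_mul]
  apply Finset.sum_eq_zero
  rintro ⟨u, v⟩ huv
  rw [Finset.HasAntidiagonal.mem_antidiagonal] at huv
  replace huv : u + v = μ := huv
  show coeff u p * coeff v q = 0
  have hsum : wdeg w u + wdeg w v = wdeg w μ := by rw [← huv, wdeg_add]
  rcases lt_or_ge (wdeg w u) a with h1 | h1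
  · rw [hp u h1, zero_mul]
  · rw [hq v (by omega), mul_zero]

lemma pow_le_Wid {w : ℕ → ℕ} {a : ℕ} {J : Ideal (MvPolynomial (Fin n) K)}
    (hJ : J ≤ Wid w a) : ∀ k : ℕ, J ^ k ≤ Wid w (a * k) := by
  intro k
  induction k with
  | zero =>
    rw [pow_zero, Ideal.one_eq_top]
    intro p _
    rw [mem_Wid]
    intro μ h; omega
  | succ k ih =>
    rw [pow_succ]
    refine Ideal.mul_le.mpr fun r hr s hs => ?_
    have := mul_mem_Wid (ih hr) (hJ hs)
    rwa [show a * k + a = a * (k + 1) by ring] at this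

/-- `vr K n i` is the variable `x_i` (or `1` if out of range). -/
noncomputable def vr (K : Type*) [Field K] (n i : ℕ) : MvPolynomial (Fin n) K :=
  if h : i < n then X ⟨i, h⟩ else 1

/-- exponent vector of `vr`. -/
noncomputable def vrm (n i : ℕ) : Fin n →₀ ℕ := if h : i < n then Finsupp.single ⟨i, h⟩ 1 else 0

/-- the edge monomial `x_i x_{i+1}`. -/
noncomputable def ed (K : Type*) [Field K] (n i : ℕ) : MvPolynomial (Fin n) K :=
  vr K n i * vr K n (i + 1)

lemma vr_eq (i : ℕ) : vr K n i = monomial (vrm n i) 1 := by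
  unfold vr vrm
  split
  · rfl
  · rw [monomial_zero', C_1]

lemma ed_eq (i : ℕ) : ed K n i = monomial (vrm n i + vrm n (i + 1)) 1 := by
  rw [ed, vr_eq, vr_eq, monomial_mul, one_mul]

lemma wdeg_vrm (w : ℕ → ℕ) {i : ℕ} (h : i < n) : wdeg w (vrm n i) = w i := by
  rw [vrm, dif_pos h, wdeg_single, mul_one]

lemma prod_monomial_one {ι : Type*} (s : Finset ι) (m : ι → (Fin n →₀ ℕ)) :
    (∏ i ∈ s, (monomial (m i) (1 : K))) = monomial (∑ i ∈ s, m i) 1 := by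
  classical
  induction s using Finset.induction_on with
  | empty => simp [monomial_zero', C_1]
  | insert _ _ h ih => rw [Finset.prod_insert h, Finset.sum_insert h, ih, monomial_mul, one_mul]

lemma prod_mem_pow {ι : Type*} (J : Ideal (MvPolynomial (Fin n) K)) (s : Finset ι)
    (f : ι → MvPolynomial (Fin n) K) (h : ∀ i ∈ s, f i ∈ J) : (∏ i ∈ s, f i) ∈ J ^ s.card := by
  classical
  induction s using Finset.induction_on with
  | empty => simp [Ideal.one_eq_top]
  | @insert x s hx ih =>
    rw [Finset.prod_insert hx, Finset.card_insert_of_notMem hx, pow_succ']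
    exact Ideal.mul_mem_mul (h _ (Finset.mem_insert_self _ _))
      (ih fun i hi => h i (Finset.mem_insert_of_mem hi))

lemma chain {r : ℕ} (hr : 1 ≤ r) (hrn : 2 * r + 1 < n) :
    vr K n (2 * r + 1) * vr K n 2 * ∏ i ∈ Finset.Ioc 1 r, ed K n (2 * i - 1)
      = ∏ i ∈ Finset.Ioc 0 r, ed K n (2 * i) := by
  induction r with
  | zero => omega
  | succ r ih =>
    rcases Nat.lt_or_ge r 1 with h1 | h1
    · have : r = 0 := by omega
      subst this
      rw [Finset.Ioc_self, Finset.prod_empty,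
        show Finset.Ioc 0 1 = {1} from rfl, Finset.prod_singleton]
      rw [ed]
      norm_num
      ring
    · rw [Finset.prod_Ioc_succ_top (by omega), Finset.prod_Ioc_succ_top (by omega)]
      have key : vr K n (2 * (r + 1) + 1) * ed K n (2 * (r + 1) - 1)
          = vr K n (2 * r + 1) * ed K n (2 * (r + 1)) := by
        rw [show 2 * (r + 1) - 1 = 2 * r + 1 by omega, ed, ed,
          show 2 * (r + 1) + 1 = 2 * r + 1 + 1 + 1 by omega,
          show 2 * (r + 1) = 2 * r + 1 + 1 by omega]
        ring
      have ihh := ih h1 (by omega)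
      linear_combination (vr K n 2 * ∏ i ∈ Finset.Ioc 1 r, ed K n (2 * i - 1)) * key
        + ed K n (2 * (r + 1)) * ihh

/-- The ideal generated by the odd-indexed variables. -/
noncomputable def Podd (K : Type*) [Field K] (n : ℕ) : Ideal (MvPolynomial (Fin n) K) :=
  Ideal.span {q | ∃ j : Fin n, j.val % 2 = 1 ∧ q = X j}

noncomputable def phi (K : Type*) [Field K] (n : ℕ) :
    MvPolynomial (Fin n) K →ₐ[K] MvPolynomial (Fin n) K :=
  aeval (fun j : Fin n => if j.val % 2 = 1 then 0 else X j)

lemma phi_X (j : Fin n) : phi K n (X j) = if j.val % 2 = 1 then 0 else X j := by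
  rw [phi, aeval_X]

lemma sub_phi_mem (g : MvPolynomial (Fin n) K) : g - phi K n g ∈ Podd K n := by
  induction g using MvPolynomial.induction_on with
  | C a => rw [phi, aeval_C]; simp
  | add p q hp hq =>
    rw [map_add]
    have : p + q - (phi K n p + phi K n q) = (p - phi K n p) + (q - phi K n q) := by ring
    rw [this]
    exact Ideal.add_mem _ hp hq
  | mul_X p j hp =>
    rw [map_mul, phi_X]
    by_cases h : j.val % 2 = 1
    · rw [if_pos h, mul_zero, sub_zero]
      exact Ideal.mul_mem_left _ _ (Ideal.subset_span ⟨j, h, rfl⟩)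
    · rw [if_neg h, show p * X j - phi K n p * X j = (p - phi K n p) * X j by ring]
      exact Ideal.mul_mem_right _ _ hp

lemma Podd_eq_ker : Podd K n = RingHom.ker (phi K n).toRingHom := by
  apply le_antisymm
  · rw [Podd, Ideal.span_le]
    rintro q ⟨j, hj, rfl⟩
    rw [SetLike.mem_coe, RingHom.mem_ker]
    show phi K n (X j) = 0
    rw [phi_X, if_pos hj]
  · intro g hg
    rw [RingHom.mem_ker] at hg
    have h2 := sub_phi_mem (K := K) (n := n) g
    rw [show (phi K n).toRingHom g = phi K n g from rfl] at hg
    rwa [hg, sub_zero] at h2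

lemma Podd_prime : (Podd K n).IsPrime := by
  rw [Podd_eq_ker]
  exact RingHom.ker_isPrime _

lemma mem_Podd_of_forall {g : MvPolynomial (Fin n) K}
    (h : ∀ μ ∈ g.support, ∃ j : Fin n, j.val % 2 = 1 ∧ μ j ≠ 0) : g ∈ Podd K n := by
  rw [g.as_sum]
  apply Ideal.sum_mem
  intro μ hμ
  obtain ⟨j, hj, hμj⟩ := h μ hμ
  have hμeq : Finsupp.single j 1 + (μ - Finsupp.single j 1) = μ := by
    ext a
    rw [Finsupp.add_apply, Finsupp.tsub_apply, Finsupp.single_apply]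
    by_cases hja : j = a
    · subst hja
      have : 1 ≤ μ j := Nat.one_le_iff_ne_zero.mpr hμj
      simp only [if_pos trivial, if_true, eq_self_iff_true]
      omega
    · simp [hja]
  have key : monomial μ (coeff μ g) = X j * monomial (μ - Finsupp.single j 1) (coeff μ g) := by
    rw [show (X j : MvPolynomial (Fin n) K) = monomial (Finsupp.single j 1) 1 from rfl,
      monomial_mul, one_mul, hμeq]
  rw [key]
  exact Ideal.mul_mem_right _ _ (Ideal.subset_span ⟨j, hj, rfl⟩)

lemma not_mem_Podd {g : MvPolynomial (Fin n) K} (h : g ∉ Podd K n) :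
    ∃ μ ∈ g.support, ∀ j : Fin n, j.val % 2 = 1 → μ j = 0 := by
  by_contra hc
  push_neg at hc
  exact h (mem_Podd_of_forall fun μ hμ => by
    obtain ⟨j, hj1, hj2⟩ := hc μ hμ
    exact ⟨j, hj1, hj2⟩)

/-! ### Facts about the edge ideal -/

lemma ed_mem {I : Ideal (MvPolynomial (Fin n) K)}
    (hI : I = Ideal.span {f | ∃ (i : ℕ) (h : i + 1 < n),
      f = (X (⟨i, Nat.lt_of_succ_lt h⟩ : Fin n) : MvPolynomial (Fin n) K) * X (⟨i + 1, h⟩ : Fin n)})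
    {i : ℕ} (h : i + 1 < n) : ed K n i ∈ I := by
  rw [hI]
  exact Ideal.subset_span ⟨i, h, by rw [ed, vr, vr, dif_pos (by omega : i < n), dif_pos h]⟩

lemma I_le_Wid {I : Ideal (MvPolynomial (Fin n) K)}
    (hI : I = Ideal.span {f | ∃ (i : ℕ) (h : i + 1 < n),
      f = (X (⟨i, Nat.lt_of_succ_lt h⟩ : Fin n) : MvPolynomial (Fin n) K) * X (⟨i + 1, h⟩ : Fin n)})
    {w : ℕ → ℕ} {c : ℕ} (hw : ∀ i, i + 1 < n → c ≤ w i + w (i + 1)) :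
    I ≤ Wid w c := by
  rw [hI, Ideal.span_le]
  rintro q ⟨i, h, rfl⟩
  rw [SetLike.mem_coe, mem_Wid]
  intro μ hμ
  have heq : (X (⟨i, by omega⟩ : Fin n) : MvPolynomial (Fin n) K) * X (⟨i + 1, h⟩ : Fin n)
      = monomial (Finsupp.single (⟨i, by omega⟩ : Fin n) 1
          + Finsupp.single (⟨i + 1, h⟩ : Fin n) 1) 1 := by
    rw [show (X (⟨i, by omega⟩ : Fin n) : MvPolynomial (Fin n) K)
        = monomial (Finsupp.single ⟨i, by omega⟩ 1) 1 from rfl,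
      show (X (⟨i + 1, h⟩ : Fin n) : MvPolynomial (Fin n) K)
        = monomial (Finsupp.single ⟨i + 1, h⟩ 1) 1 from rfl,
      monomial_mul, one_mul]
  rw [heq, coeff_monomial, if_neg]
  intro hc
  rw [← hc, wdeg_add, wdeg_single, wdeg_single] at hμ
  simp only [mul_one] at hμ
  have := hw i h
  omega

/-! ### The master lemma -/

lemma master {K : Type*} [Field K] {n : ℕ} (hn : 2 ≤ n)
    {I : Ideal (MvPolynomial (Fin n) K)}
    (hI : I = Ideal.span {f | ∃ (i : ℕ) (h : i + 1 < n),
      f = (X (⟨i, Nat.lt_of_succ_lt h⟩ : Fin n) : MvPolynomial (Fin n) K) * X (⟨i + 1, h⟩ : Fin n)})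
    {k : ℕ} (hk : 1 ≤ k) (mf : Fin n →₀ ℕ)
    (hdeg : mf.degree = 2 * k - 1)
    (hodd : wdeg (fun i => i % 2) mf = k - 1)
    (hmem : ∀ j : Fin n, j.val % 2 = 1 → X j * monomial mf (1 : K) ∈ I ^ k) :
    vNumber (I ^ k) = 2 * k - 1 := by
  set f : MvPolynomial (Fin n) K := monomial mf 1 with hf
  have hfhom : f.IsHomogeneous (2 * k - 1) := isHomogeneous_monomial _ hdeg
  -- the colon ideal is exactly Podd
  have hwodd : I ≤ Wid (fun i => i % 2) 1 := I_le_Wid hI (by intro i _; omega)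
  have hIk_odd : I ^ k ≤ Wid (fun i => i % 2) k := by
    have := pow_le_Wid hwodd k
    rwa [one_mul] at this
  have hcolon : (I ^ k).colon (Ideal.span {f}) = Podd K n := by
    apply le_antisymm
    · intro g hg
      rw [Ideal.mem_colon_span_singleton] at hg
      by_contra hgp
      obtain ⟨μ0, hμ0s, hμ0⟩ := not_mem_Podd hgp
      have h1 : coeff (μ0 + mf) (g * f) = coeff μ0 g := by
        rw [hf, coeff_mul_monomial, mul_one]
      have hw0 : wdeg (fun i => i % 2) μ0 = 0 := by
        rw [wdeg]
        apply Finset.sum_eq_zero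
        intro j _
        rcases Nat.mod_two_eq_zero_or_one j.val with h | h
        · rw [h, zero_mul]
        · rw [hμ0 j h, mul_zero]
      have h2 : wdeg (fun i => i % 2) (μ0 + mf) < k := by
        rw [wdeg_add, hw0, hodd]; omega
      have h3 := (mem_Wid.mp (hIk_odd hg)) (μ0 + mf) h2
      rw [h1] at h3
      exact (mem_support_iff.mp hμ0s) h3
    · rw [Podd, Ideal.span_le]
      rintro q ⟨j, hj, rfl⟩
      rw [SetLike.mem_coe, Ideal.mem_colon_span_singleton]
      exact hmem j hj
  have hprime : (Podd K n).IsPrime := Podd_prime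
  have hsmul : ∀ a : MvPolynomial (Fin n) K,
      a • (Ideal.Quotient.mk (I ^ k) f) = Ideal.Quotient.mk (I ^ k) (a * f) := fun a => rfl
  have hass : Podd K n ∈ Ass (I ^ k) := by
    refine ⟨hprime, Ideal.Quotient.mk (I ^ k) f, ?_⟩
    have hc : (⊥ : Submodule (MvPolynomial (Fin n) K) (MvPolynomial (Fin n) K ⧸ I ^ k)).colon
        {Ideal.Quotient.mk (I ^ k) f} = Podd K n := by
      ext a
      rw [Submodule.mem_colon_singleton, Submodule.mem_bot, hsmul a, Ideal.Quotient.eq_zero_iff_mem,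
        ← Ideal.mem_colon_span_singleton, hcolon]
    rw [hc, hprime.radical]
  have hmemA : (2 * k - 1) ∈ {d | ∃ f : MvPolynomial (Fin n) K, ∃ p ∈ Ass (I ^ k),
      f.IsHomogeneous d ∧ (I ^ k).colon (Ideal.span {f}) = p} :=
    ⟨f, Podd K n, hass, hfhom, hcolon⟩
  -- the lower bound
  have hone : I ≤ Wid (fun _ => 1) 2 := I_le_Wid hI (by intro i _; omega)
  have hIk1 : I ^ k ≤ Wid (fun _ => 1) (2 * k) := pow_le_Wid hone k
  have hlow : ∀ d ∈ {d | ∃ f : MvPolynomial (Fin n) K, ∃ p ∈ Ass (I ^ k),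
      f.IsHomogeneous d ∧ (I ^ k).colon (Ideal.span {f}) = p}, 2 * k - 1 ≤ d := by
    rintro d ⟨f', p, hpass, hfhom', hcolon'⟩
    have hp : p.IsPrime := hpass.1
    have hf'ne : f' ≠ 0 := by
      rintro rfl
      have h1 : (1 : MvPolynomial (Fin n) K) ∈ p := by
        rw [← hcolon', Ideal.mem_colon_span_singleton, mul_zero]
        exact zero_mem _
      exact hp.ne_top ((Ideal.eq_top_iff_one _).mpr h1)
    have hIkp : I ^ k ≤ p := by
      intro a ha
      rw [← hcolon', Ideal.mem_colon_span_singleton]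
      exact Ideal.mul_mem_right _ _ ha
    have hedp : ed K n 0 ∈ p :=
      hp.mem_of_pow_mem k (hIkp (Ideal.pow_mem_pow (ed_mem hI (by omega : 0 + 1 < n)) k))
    have hvv : vr K n 0 ∈ p ∨ vr K n 1 ∈ p :=
      hp.mem_or_mem (show vr K n 0 * vr K n 1 ∈ p from hedp)
    have hvr_hom : ∀ i (h : i < n), (vr K n i).IsHomogeneous 1 := by
      intro i h
      rw [vr, dif_pos h]
      exact isHomogeneous_X _ _
    have hvr_ne : ∀ i (h : i < n), vr K n i ≠ 0 := by
      intro i h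
      rw [vr, dif_pos h]
      exact X_ne_zero _
    obtain ⟨g, hgp, hghom, hgne⟩ :
        ∃ g : MvPolynomial (Fin n) K, g ∈ p ∧ g.IsHomogeneous 1 ∧ g ≠ 0 := by
      rcases hvv with h | h
      · exact ⟨_, h, hvr_hom 0 (by omega), hvr_ne 0 (by omega)⟩
      · exact ⟨_, h, hvr_hom 1 (by omega), hvr_ne 1 (by omega)⟩
    have hgf : g * f' ∈ I ^ k := by
      rw [← Ideal.mem_colon_span_singleton]
      rw [← hcolon'] at hgp
      exact hgp
    have hgf_ne : g * f' ≠ 0 := mul_ne_zero hgne hf'ne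
    have hgfhom : (g * f').IsHomogeneous (1 + d) := hghom.mul hfhom'
    have htd : (g * f').totalDegree = 1 + d := hgfhom.totalDegree hgf_ne
    obtain ⟨μ, hc⟩ := exists_coeff_ne_zero hgf_ne
    have h2k : 2 * k ≤ wdeg (fun _ => 1) μ := by
      by_contra hlt
      exact hc ((mem_Wid.mp (hIk1 hgf)) μ (by omega))
    have hle : wdeg (fun _ => 1) μ ≤ (g * f').totalDegree := by
      rw [wdeg_one_eq']
      exact le_totalDegree (mem_support_iff.mpr hc)
    omega
  unfold vNumber
  exact le_antisymm (Nat.sInf_le hmemA) (le_csInf ⟨_, hmemA⟩ hlow)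

end Aux

/-- For `n ≥ 2`, the edge ideal `I = ⟨x_1x_2, …, x_{n−1}x_n⟩` of the path
`P_n` satisfies `v(I^k) = 2k − 1` for all `k ≥ 1` with `k ≥ ⌊n/2⌋ − 1`. -/
theorem stmt15 {K : Type*} [Field K] {n : ℕ} (hn : 2 ≤ n)
    (I : Ideal (MvPolynomial (Fin n) K))
    (hI : I = Ideal.span {f | ∃ (i : ℕ) (h : i + 1 < n),
      f = (X (⟨i, by omega⟩ : Fin n) : MvPolynomial (Fin n) K) * X (⟨i + 1, h⟩ : Fin n)}) :
    ∀ k : ℕ, 1 ≤ k → n / 2 - 1 ≤ k → (vNumber (I ^ k) : ℤ) = 2 * k - 1 := by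
  intro k hk hk2
  have key : vNumber (I ^ k) = 2 * k - 1 := by
    rcases Nat.lt_or_ge n 4 with hn4 | hn4
    · -- small case: n = 2 or 3
      set mf : Fin n →₀ ℕ := vrm n 0 + (k - 1) • (vrm n 0 + vrm n 1) with hmf
      have hfp : monomial mf (1 : K) = vr K n 0 * ed K n 0 ^ (k - 1) := by
        rw [vr_eq, ed_eq, monomial_pow, one_pow, monomial_mul, one_mul]
      apply master hn hI hk mf
      · rw [← wdeg_one_eq, hmf, wdeg_add, wdeg_smul, wdeg_add,
          wdeg_vrm _ (by omega : (0:ℕ) < n), wdeg_vrm _ (by omega : (1:ℕ) < n)]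
        omega
      · rw [hmf, wdeg_add, wdeg_smul, wdeg_add,
          wdeg_vrm _ (by omega : (0:ℕ) < n), wdeg_vrm _ (by omega : (1:ℕ) < n)]
        omega
      · intro j hj
        have hj1 : j.val = 1 := by have := j.isLt; omega
        have hXj : (X j : MvPolynomial (Fin n) K) = vr K n 1 := by
          rw [vr, dif_pos (by omega : (1:ℕ) < n)]
          congr 1
          ext
          simp [hj1]
        rw [hfp, hXj]
        have hrw : vr K n 1 * (vr K n 0 * ed K n 0 ^ (k - 1)) = ed K n 0 ^ (k - 1 + 1) := by
          rw [pow_succ, ed]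
          ring
        rw [hrw, show k - 1 + 1 = k by omega]
        exact Ideal.pow_mem_pow (ed_mem hI (by omega : 0 + 1 < n)) k
    · -- main case: n ≥ 4
      set c : ℕ := n / 2 with hc
      have hc2 : 2 ≤ c := by omega
      have hck : c - 1 ≤ k := hk2
      set b : ℕ := k - (c - 1) with hb
      set mf : Fin n →₀ ℕ := (vrm n 2 + b • (vrm n 1 + vrm n 2))
          + ∑ i ∈ Finset.Ioc 1 (c - 1), (vrm n (2 * i - 1) + vrm n (2 * i)) with hmf
      have hbound : ∀ i ∈ Finset.Ioc 1 (c - 1), 2 * i < n := by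
        intro i hi
        rw [Finset.mem_Ioc] at hi
        omega
      have hprodeq : (∏ i ∈ Finset.Ioc 1 (c - 1), ed K n (2 * i - 1))
          = monomial (∑ i ∈ Finset.Ioc 1 (c - 1), (vrm n (2 * i - 1) + vrm n (2 * i))) (1 : K) := by
        rw [Finset.prod_congr rfl (fun i hi => by
          rw [ed_eq, show 2 * i - 1 + 1 = 2 * i from by
            rw [Finset.mem_Ioc] at hi; omega])]
        exact prod_monomial_one _ _
      have hfp : monomial mf (1 : K)
          = vr K n 2 * ed K n 1 ^ b * ∏ i ∈ Finset.Ioc 1 (c - 1), ed K n (2 * i - 1) := by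
        rw [vr_eq, ed_eq, monomial_pow, one_pow, hprodeq, monomial_mul, monomial_mul,
          one_mul, one_mul]
      have hwdeg_mf : ∀ w : ℕ → ℕ, wdeg w mf = (w 2 + b * (w 1 + w 2))
          + ∑ i ∈ Finset.Ioc 1 (c - 1), (w (2 * i - 1) + w (2 * i)) := by
        intro w
        rw [hmf, wdeg_add, wdeg_add, wdeg_smul, wdeg_add, wdeg_sum,
          wdeg_vrm _ (by omega : (2:ℕ) < n), wdeg_vrm _ (by omega : (1:ℕ) < n)]
        congr 1
        exact Finset.sum_congr rfl fun i hi => by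
          have h2i := hbound i hi
          rw [wdeg_add, wdeg_vrm _ (by omega : 2 * i - 1 < n), wdeg_vrm _ h2i]
      apply master hn hI hk mf
      · rw [← wdeg_one_eq, hwdeg_mf]
        rw [Finset.sum_const, Nat.card_Ioc]
        simp only [smul_eq_mul]
        omega
      · rw [hwdeg_mf]
        rw [Finset.sum_congr rfl (fun i hi => by
          have hi' := Finset.mem_Ioc.mp hi
          show (2 * i - 1) % 2 + (2 * i) % 2 = 1
          omega)]
        rw [Finset.sum_const, Nat.card_Ioc]
        simp only [smul_eq_mul]
        norm_num
        omega
      · intro j hj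
        obtain ⟨r, hj2⟩ : ∃ r, j.val = 2 * r + 1 := ⟨j.val / 2, by omega⟩
        have hjn : 2 * r + 1 < n := by rw [← hj2]; exact j.isLt
        have hrc : r ≤ c - 1 := by omega
        have hXj : (X j : MvPolynomial (Fin n) K) = vr K n (2 * r + 1) := by
          rw [vr, dif_pos hjn]
          congr 1
          ext
          simp [hj2]
        rw [hfp, hXj]
        rcases Nat.lt_or_ge r 1 with hr0 | hr1
        · -- r = 0, j = 1
          have : r = 0 := by omega
          subst this
          have hrw : vr K n (2 * 0 + 1) * (vr K n 2 * ed K n 1 ^ b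
              * ∏ i ∈ Finset.Ioc 1 (c - 1), ed K n (2 * i - 1))
              = ed K n 1 ^ (b + 1) * ∏ i ∈ Finset.Ioc 1 (c - 1), ed K n (2 * i - 1) := by
            rw [pow_succ, ed]
            norm_num
            ring
          rw [hrw]
          have h1 : ed K n 1 ^ (b + 1) ∈ I ^ (b + 1) :=
            Ideal.pow_mem_pow (ed_mem hI (by omega : 1 + 1 < n)) _
          have h2 : (∏ i ∈ Finset.Ioc 1 (c - 1), ed K n (2 * i - 1)) ∈ I ^ (c - 2) := by
            have := prod_mem_pow I (Finset.Ioc 1 (c - 1)) _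
              (fun i hi => ed_mem hI (show (2 * i - 1) + 1 < n from by
                have := hbound i hi
                have := Finset.mem_Ioc.mp hi
                omega))
            rwa [Nat.card_Ioc] at this
          have hpow : I ^ (b + 1) * I ^ (c - 1 - 1) = I ^ k := by
            rw [← pow_add]
            congr 1
            omega
          exact hpow ▸ Ideal.mul_mem_mul h1 h2
        · -- r ≥ 1
          rw [← Finset.prod_Ioc_consecutive _ hr1 hrc]
          have hch := chain (K := K) (n := n) hr1 hjn
          have hrw : vr K n (2 * r + 1) * (vr K n 2 * ed K n 1 ^ b
              * ((∏ i ∈ Finset.Ioc 1 r, ed K n (2 * i - 1))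
                * ∏ i ∈ Finset.Ioc r (c - 1), ed K n (2 * i - 1)))
              = (∏ i ∈ Finset.Ioc 0 r, ed K n (2 * i))
                * (ed K n 1 ^ b * ∏ i ∈ Finset.Ioc r (c - 1), ed K n (2 * i - 1)) := by
            rw [← hch]
            ring
          rw [hrw]
          have h1 : (∏ i ∈ Finset.Ioc 0 r, ed K n (2 * i)) ∈ I ^ r := by
            have := prod_mem_pow I (Finset.Ioc 0 r) _
              (fun i hi => ed_mem hI (show 2 * i + 1 < n from by
                have := Finset.mem_Ioc.mp hi
                omega))
            rwa [Nat.card_Ioc, Nat.sub_zero] at this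
          have h2 : ed K n 1 ^ b ∈ I ^ b :=
            Ideal.pow_mem_pow (ed_mem hI (by omega : 1 + 1 < n)) _
          have h3 : (∏ i ∈ Finset.Ioc r (c - 1), ed K n (2 * i - 1)) ∈ I ^ (c - 1 - r) := by
            have := prod_mem_pow I (Finset.Ioc r (c - 1)) _
              (fun i hi => ed_mem hI (show (2 * i - 1) + 1 < n from by
                have := Finset.mem_Ioc.mp hi
                omega))
            rwa [Nat.card_Ioc] at this
          have hpow : I ^ r * (I ^ b * I ^ (c - 1 - r)) = I ^ k := by
            rw [← pow_add, ← pow_add]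
            congr 1
            omega
          exact hpow ▸ Ideal.mul_mem_mul h1 (Ideal.mul_mem_mul h2 h3)
  rw [key]
  have h1 : (1 : ℕ) ≤ 2 * k := by omega
  rw [Nat.cast_sub h1]
  push_cast
  ring
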